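/- Let a : ℕ → ℤ be any integer sequence with a(1) = a₁, and let n be a prime number. Then ∑_{k=1}^{n-1} (1/k) · F^Δ(n,k) is an integer, where F^Δ(n,k) = ∑_{λ₁+...+λ_k=n, λᵢ>0} a(λ₁)···a(λ_k). -/

import Mathlib

open Finset BigOperators

/-- The compositae: sum over compositions of `n` into `k` positive parts
of products of `a`-values. -/
def compositae (a : ℕ → ℤ) (n k : ℕ) : ℤ :=
  ∑ l ∈ (Finset.Nat.antidiagonalTuple k n).filter (fun l => ∀ i, 0 < l i),
    ∏ i, a (l i)

namespace CompAux

open Fin.NatCast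

variable {k : ℕ} [NeZero k]

/-- Rotation of a tuple by `j`. -/
def rot (j : ℕ) (l : Fin k → ℕ) : Fin k → ℕ := fun i => l (i + (j : Fin k))

lemma rot_rot (j j' : ℕ) (l : Fin k → ℕ) : rot j (rot j' l) = rot (j' + j) l := by
  funext i
  simp only [rot, Nat.cast_add, add_assoc, add_comm (j : Fin k)]

lemma rot_zero (l : Fin k → ℕ) : rot 0 l = l := by
  funext i; simp [rot]

lemma rot_mod (j : ℕ) (l : Fin k → ℕ) : rot j l = rot (j % k) l := by
  have : ((j : Fin k)) = ((j % k : ℕ) : Fin k) := by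
    apply Fin.ext
    simp [Fin.val_natCast, Nat.mod_mod_of_dvd]
  funext i; simp [rot, this]

lemma sum_rot (j : ℕ) (l : Fin k → ℕ) : ∑ i, rot j l i = ∑ i, l i :=
  Equiv.sum_comp (Equiv.addRight ((j : Fin k))) l

lemma prod_rot (a : ℕ → ℤ) (j : ℕ) (l : Fin k → ℕ) :
    ∏ i, a (rot j l i) = ∏ i, a (l i) :=
  Equiv.prod_comp (Equiv.addRight ((j : Fin k))) (fun x => a (l x))

omit [NeZero k] in
lemma period_sub {b : ℕ → ℕ} {p q : ℕ} (hp : ∀ m, b (m + p) = b m)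
    (hq : ∀ m, b (m + q) = b m) (h : p ≤ q) : ∀ m, b (m + (q - p)) = b m := by
  intro m
  have h1 := hp (m + (q - p))
  rw [show m + (q - p) + p = m + q by omega] at h1
  rw [← h1, hq]

omit [NeZero k] in
lemma period_mod {b : ℕ → ℕ} {p : ℕ} (hp : ∀ m, b (m + p) = b m) :
    ∀ q, (∀ m, b (m + q) = b m) → ∀ m, b (m + q % p) = b m := by
  intro q
  induction q using Nat.strong_induction_on with
  | _ q ih =>
    intro hq m
    rcases Nat.eq_zero_or_pos p with hp0 | hp0
    · simpa [hp0] using hq m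
    rcases lt_or_ge q p with h | h
    · rw [Nat.mod_eq_of_lt h]; exact hq m
    · rw [Nat.mod_eq_sub_mod h]
      exact ih (q - p) (by omega) (period_sub hp hq h) m

omit [NeZero k] in
lemma period_gcd {b : ℕ → ℕ} : ∀ p q : ℕ, (∀ m, b (m + p) = b m) →
    (∀ m, b (m + q) = b m) → ∀ m, b (m + Nat.gcd p q) = b m := by
  intro p q
  induction p, q using Nat.gcd.induction with
  | H0 q => intro _ hq m; simpa using hq m
  | H1 p q hp0 ih =>
    intro hp hq m
    rw [Nat.gcd_rec]
    exact ih (period_mod hp q hq) hp m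

omit [NeZero k] in
lemma period_mul {b : ℕ → ℕ} {g : ℕ} (hg : ∀ m, b (m + g) = b m) (c : ℕ) :
    ∀ x, b (c * g + x) = b x := by
  induction c with
  | zero => simp
  | succ c ih =>
    intro x
    rw [show (c + 1) * g + x = (c * g + x) + g by ring, hg, ih]

omit [NeZero k] in
lemma period_sum {b : ℕ → ℕ} {g : ℕ} (hg : ∀ m, b (m + g) = b m) (c : ℕ) :
    ∑ m ∈ range (c * g), b m = c * ∑ m ∈ range g, b m := by
  induction c with
  | zero => simp
  | succ c ih =>
    rw [show (c + 1) * g = c * g + g by ring, Finset.sum_range_add, ih]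
    simp only [period_mul hg c]
    ring

/-- Freeness: a rotation fixing a tuple summing to a prime `n > k`
must be trivial. -/
lemma rot_eq_self {n : ℕ} (hn : n.Prime) (hk : k < n)
    {l : Fin k → ℕ} (hl : ∑ i, l i = n) {j : ℕ} (hj : j < k) (h : rot j l = l) :
    j = 0 := by
  by_contra hj0
  have hk0 : 0 < k := Nat.pos_of_ne_zero (NeZero.ne k)
  set b : ℕ → ℕ := fun m => l ⟨m % k, Nat.mod_lt _ hk0⟩ with hb
  have Pk : ∀ m, b (m + k) = b m := by
    intro m; simp [hb, Nat.add_mod_right]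
  have Pj : ∀ m, b (m + j) = b m := by
    intro m
    have h2 := congrFun h ⟨m % k, Nat.mod_lt _ hk0⟩
    have h3 : (⟨m % k, Nat.mod_lt _ hk0⟩ + (j : Fin k) : Fin k)
        = ⟨(m + j) % k, Nat.mod_lt _ hk0⟩ := by
      apply Fin.ext
      simp [Fin.val_add, Fin.val_natCast, Nat.add_mod]
    simpa [rot, hb, h3] using h2
  have Pg := period_gcd j k Pj Pk
  set g := Nat.gcd j k with hgdef
  have hgk : g ∣ k := Nat.gcd_dvd_right _ _
  have hgj : g ∣ j := Nat.gcd_dvd_left _ _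
  have hg0 : 0 < g := Nat.gcd_pos_of_pos_left _ (by omega)
  have hsum : ∑ m ∈ range k, b m = n := by
    rw [← hl]
    rw [← Fin.sum_univ_eq_sum_range (fun m => b m) k]
    apply Finset.sum_congr rfl
    intro i _
    have : (⟨(i : ℕ) % k, Nat.mod_lt _ hk0⟩ : Fin k) = i := by
      apply Fin.ext; simp [Nat.mod_eq_of_lt i.isLt]
    simp [hb, this]
  have hkg : (k / g) * g = k := Nat.div_mul_cancel hgk
  have hsplit : ∑ m ∈ range k, b m = (k / g) * ∑ m ∈ range g, b m := by
    have := period_sum Pg (k / g)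
    rwa [hkg] at this
  have hdvd : (k / g) ∣ n := ⟨_, by rw [← hsum, hsplit]⟩
  rcases (Nat.Prime.eq_one_or_self_of_dvd hn _ hdvd) with h1 | h1
  · rw [h1, one_mul] at hkg
    have : g ≤ j := Nat.le_of_dvd (by omega) hgj
    omega
  · have : k / g ≤ k := Nat.div_le_self _ _
    omega

/-- Orbit of a tuple under rotations. -/
def osets (l : Fin k → ℕ) : Finset (Fin k → ℕ) :=
  (range k).image (fun j => rot j l)

/-- A choice function on finsets of tuples. -/
noncomputable def rep (s : Finset (Fin k → ℕ)) : Fin k → ℕ :=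
  if h : s.Nonempty then h.choose else fun _ => 0

lemma rep_mem {s : Finset (Fin k → ℕ)} (h : s.Nonempty) : rep s ∈ s := by
  rw [rep, dif_pos h]; exact h.choose_spec

lemma osets_nonempty (l : Fin k → ℕ) : (osets l).Nonempty := by
  have hk0 : 0 < k := Nat.pos_of_ne_zero (NeZero.ne k)
  exact ⟨rot 0 l, Finset.mem_image_of_mem _ (mem_range.2 hk0)⟩

lemma self_mem_osets (l : Fin k → ℕ) : l ∈ osets l := by
  have hk0 : 0 < k := Nat.pos_of_ne_zero (NeZero.ne k)
  have : rot 0 l ∈ osets l := Finset.mem_image_of_mem _ (mem_range.2 hk0)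
  rwa [rot_zero] at this

omit [NeZero k] in
lemma key_mod (m r : ℕ) (hm : m < k) (hr : r < k) :
    ((m + k - r) % k + r) % k = m := by
  rw [Nat.mod_add_mod, show m + k - r + r = m + k by omega, Nat.add_mod_right,
    Nat.mod_eq_of_lt hm]

lemma osets_rot (j : ℕ) (l : Fin k → ℕ) : osets (rot j l) = osets l := by
  have hk0 : 0 < k := Nat.pos_of_ne_zero (NeZero.ne k)
  ext x
  simp only [osets, mem_image, mem_range]
  constructor
  · rintro ⟨m, hm, rfl⟩
    refine ⟨(j + m) % k, Nat.mod_lt _ hk0, ?_⟩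
    rw [rot_rot, rot_mod (j + m)]
  · rintro ⟨m, hm, rfl⟩
    refine ⟨(m + k - j % k) % k, Nat.mod_lt _ hk0, ?_⟩
    rw [rot_rot]
    have hx : (j + (m + k - j % k) % k) % k = m := by
      rw [Nat.add_mod, Nat.mod_eq_of_lt (Nat.mod_lt _ hk0), Nat.add_comm (j % k)]
      exact key_mod m (j % k) hm (Nat.mod_lt _ hk0)
    rw [rot_mod, hx]

/-- The key divisibility: for `n` prime and `1 ≤ k < n`, `k ∣ F(n,k)`. -/
lemma dvd_compositae (a : ℕ → ℤ) {n kk : ℕ} (hn : n.Prime) (hk1 : 1 ≤ kk)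
    (hkn : kk < n) : (kk : ℤ) ∣ compositae a n kk := by
  haveI : NeZero kk := ⟨by omega⟩
  classical
  set S := (Finset.Nat.antidiagonalTuple kk n).filter (fun l => ∀ i, 0 < l i) with hS
  set f : (Fin kk → ℕ) → ℤ := fun l => ∏ i, a (l i) with hf
  have hmemS : ∀ l : Fin kk → ℕ, l ∈ S ↔ (∑ i, l i = n ∧ ∀ i, 0 < l i) := by
    intro l
    simp [hS, Finset.mem_filter, Finset.Nat.mem_antidiagonalTuple]
  have hrotS : ∀ (j : ℕ) (l : Fin kk → ℕ), l ∈ S → rot j l ∈ S := by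
    intro j l hl
    rw [hmemS] at hl ⊢
    exact ⟨by rw [sum_rot]; exact hl.1, fun i => hl.2 _⟩
  set c : (Fin kk → ℕ) → (Fin kk → ℕ) := fun l => rep (osets l) with hc
  have hc_mem : ∀ l, c l ∈ osets l := fun l => rep_mem (osets_nonempty l)
  have hc_rot : ∀ (j : ℕ) l, c (rot j l) = c l := fun j l =>
    congrArg rep (osets_rot j l)
  have hinj : ∀ l ∈ S, ∀ x ∈ range kk, ∀ y ∈ range kk, rot x l = rot y l → x = y := by
    have haux : ∀ l ∈ S, ∀ x y : ℕ, x ≤ y → y < kk → rot x l = rot y l → x = y := by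
      intro l hl x y hxy hy h
      have h2 : rot (kk - x) (rot x l) = rot (kk - x) (rot y l) := by rw [h]
      rw [rot_rot, rot_rot, show x + (kk - x) = kk by omega,
        show y + (kk - x) = (y - x) + kk by omega] at h2
      rw [rot_mod kk, Nat.mod_self, rot_zero, rot_mod ((y - x) + kk),
        Nat.add_mod_right, Nat.mod_eq_of_lt (by omega)] at h2
      have := rot_eq_self hn hkn ((hmemS l).1 hl).1 (show y - x < kk by omega) h2.symm
      omega
    intro l hl x hx y hy hxy
    rw [mem_range] at hx hy
    rcases le_total x y with h | h
    · exact haux l hl x y h hy hxy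
    · exact (haux l hl y x h hx hxy.symm).symm
  have horbit_sum : ∀ r ∈ S, ∑ x ∈ osets r, f x = (kk : ℤ) * f r := by
    intro r hr
    rw [show osets r = (range kk).image (fun j => rot j r) from rfl,
      Finset.sum_image (fun x hx y hy hxy => hinj r hr x hx y hy hxy)]
    have hconst : ∀ j ∈ range kk, f (rot j r) = f r := by
      intro j _
      exact prod_rot a j r
    rw [Finset.sum_congr rfl hconst, Finset.sum_const, Finset.card_range,
      nsmul_eq_mul]
  have hmaps : ∀ l ∈ S, c l ∈ S.image c := fun l hl => Finset.mem_image_of_mem c hl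
  have hfib := Finset.sum_fiberwise_of_maps_to hmaps f
  have hcomp : compositae a n kk = ∑ r ∈ S.image c, (kk : ℤ) * f r := by
    have h0 : compositae a n kk = ∑ l ∈ S, f l := rfl
    rw [h0, ← hfib]
    apply Finset.sum_congr rfl
    intro r hr
    obtain ⟨l₀, hl₀S, hcl₀⟩ := Finset.mem_image.1 hr
    obtain ⟨j, hj, hrot⟩ := Finset.mem_image.1 (hc_mem l₀)
    have hrS : r ∈ S := by
      rw [← hcl₀, ← hrot]; exact hrotS j l₀ hl₀S
    have hcr : c r = r := by
      rw [← hcl₀, ← hrot, hc_rot, hrot, hcl₀]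
    have hfiber : S.filter (fun l => c l = r) = osets r := by
      ext x
      simp only [Finset.mem_filter]
      constructor
      · rintro ⟨hxS, hcx⟩
        obtain ⟨j', _, hrot'⟩ := Finset.mem_image.1 (hc_mem x)
        have : osets r = osets x := by rw [← hcx, ← hrot', osets_rot]
        rw [this]; exact self_mem_osets x
      · intro hx
        obtain ⟨j', _, hrot'⟩ := Finset.mem_image.1 hx
        refine ⟨?_, ?_⟩
        · rw [← hrot']; exact hrotS j' r hrS
        · rw [← hrot', hc_rot, hcr]
    rw [hfiber, horbit_sum r hrS]
  rw [hcomp]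
  exact Finset.dvd_sum (fun r _ => dvd_mul_right _ _)

end CompAux

theorem stmt_1 (a : ℕ → ℤ) (n : ℕ) (hn : Nat.Prime n) :
    ∃ m : ℤ, ∑ k ∈ Finset.Icc 1 (n - 1), (compositae a n k : ℚ) / k = m := by
  refine ⟨∑ k ∈ Finset.Icc 1 (n - 1), compositae a n k / (k : ℤ), ?_⟩
  rw [Int.cast_sum]
  apply Finset.sum_congr rfl
  intro k hk
  rw [Finset.mem_Icc] at hk
  have h2 := hn.two_le
  have hdvd : (k : ℤ) ∣ compositae a n k :=
    CompAux.dvd_compositae a hn hk.1 (by omega)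
  rw [Int.cast_div_charZero hdvd, Int.cast_natCast]
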